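/- Let a ≥ 0 and λ₀ > 0. There exists C' > 0 such that for all λ ≥ λ₀ and all y ∈ H⁴(-1,0) with y(-1) = y(0) = y'(0) = 0, one has ∑_{k=0}^{4} λ^k ‖∂_x^{4-k} y‖²_{L²} ≤ C' ( ‖y⁽⁴⁾ + (a-λ) y''‖²_{L²} + ‖y''' + (a-λ) y'‖²_{L²} + λ⁴ ‖y‖²_{L²} ). -/

import Mathlib

open MeasureTheory Finset intervalIntegral Set

lemma fo_exists_mean (v : ℝ → ℝ) (hv : Continuous v) {a b : ℝ} (hab : a < b) :
    ∃ ξ ∈ Set.Icc a b, (b - a) * (v ξ)^2 ≤ ∫ x in a..b, (v x)^2 := by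
  obtain ⟨ξ, hξ, hmin⟩ := isCompact_Icc.exists_isMinOn ⟨a, Set.left_mem_Icc.2 hab.le⟩
    ((hv.pow 2).continuousOn : ContinuousOn (fun x => (v x)^2) (Set.Icc a b))
  refine ⟨ξ, hξ, ?_⟩
  have h1 : ∫ x in a..b, (v ξ)^2 ≤ ∫ x in a..b, (v x)^2 := by
    apply integral_mono_on hab.le _root_.intervalIntegrable_const ((hv.pow 2).intervalIntegrable a b)
    intro x hx; exact hmin hx
  simpa using h1.trans_eq' (by simp [smul_eq_mul, mul_comm])

lemma fo_sub_integral_bound (f : ℝ → ℝ) (hf : Continuous f) {a b ζ x : ℝ}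
    (hζ : ζ ∈ Set.Icc a b) (hx : x ∈ Set.Icc a b) :
    ∫ t in ζ..x, f t ≤ ∫ t in a..b, |f t| := by
  have habs : Continuous (fun t => |f t|) := hf.abs
  rcases le_total ζ x with h | h
  · calc ∫ t in ζ..x, f t ≤ |∫ t in ζ..x, f t| := le_abs_self _
      _ ≤ ∫ t in ζ..x, |f t| := intervalIntegral.abs_integral_le_integral_abs h
      _ ≤ ∫ t in a..b, |f t| := by
          apply intervalIntegral.integral_mono_interval hζ.1 h hx.2
          · filter_upwards with t using abs_nonneg _
          · exact habs.intervalIntegrable a b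
  · calc ∫ t in ζ..x, f t = -(∫ t in x..ζ, f t) := (intervalIntegral.integral_symm x ζ)
      _ ≤ |∫ t in x..ζ, f t| := by rw [abs_eq_max_neg]; exact le_max_right _ _
      _ ≤ ∫ t in x..ζ, |f t| := intervalIntegral.abs_integral_le_integral_abs h
      _ ≤ ∫ t in a..b, |f t| := by
          apply intervalIntegral.integral_mono_interval hx.1 h hζ.2
          · filter_upwards with t using abs_nonneg _
          · exact habs.intervalIntegrable a b

lemma fo_young (p q L : ℝ) (hL : 0 < L) : 2*L*|2*p*q| ≤ p^2 + 4*L^2*q^2 := by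
  rcases abs_cases (2*p*q) with ⟨he, _⟩ | ⟨he, _⟩ <;> rw [he] <;>
    nlinarith [sq_nonneg (p - 2*L*q), sq_nonneg (p + 2*L*q)]

set_option maxHeartbeats 1000000 in
lemma fo_local (v : ℝ → ℝ) (hv : ContDiff ℝ 2 v) {a b : ℝ} (hab : a < b) :
    (b-a)^2 * ∫ x in a..b, (deriv v x)^2 ≤
      216 * (∫ x in a..b, (v x)^2) + 4*(b-a)^4 * (∫ x in a..b, (deriv (deriv v) x)^2) := by
  obtain ⟨L, hLdef⟩ : ∃ L : ℝ, L = b - a := ⟨_, rfl⟩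
  rw [← hLdef]
  have hL : 0 < L := by rw [hLdef]; linarith
  have hv0 : Continuous v := hv.continuous
  have h2 : ContDiff ℝ 1 (deriv v) := by
    have hv' : ContDiff ℝ ((1 + 1 : ℕ) : WithTop ℕ∞) v := by exact_mod_cast hv
    have h := ContDiff.iterate_deriv' 1 1 hv'
    simpa using h
  have hv1 : Continuous (deriv v) := h2.continuous
  have hv2 : Continuous (deriv (deriv v)) := h2.continuous_deriv le_rfl
  have hdv : ∀ x, HasDerivAt v (deriv v x) x := fun x =>
    ((hv.differentiable (by norm_num)) x).hasDerivAt
  have hdv2 : ∀ x, HasDerivAt (deriv v) (deriv (deriv v) x) x := fun x =>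
    ((h2.differentiable (by norm_num)) x).hasDerivAt
  set F : ℝ → ℝ := fun t => 2 * deriv v t * deriv (deriv v) t with hFdef
  have hF : Continuous F := (continuous_const.mul hv1).mul hv2
  set Q : ℝ := ∫ x in a..b, (v x)^2 with hQdef
  set P : ℝ := ∫ x in a..b, (deriv v x)^2 with hPdef
  set S : ℝ := ∫ x in a..b, (deriv (deriv v) x)^2 with hSdef
  have hQ0 : 0 ≤ Q := integral_nonneg hab.le (fun x _ => sq_nonneg _)
  have hP0 : 0 ≤ P := integral_nonneg hab.le (fun x _ => sq_nonneg _)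
  have hS0 : 0 ≤ S := integral_nonneg hab.le (fun x _ => sq_nonneg _)
  -- mean value points
  obtain ⟨ξ, hξmem, hξ⟩ := fo_exists_mean v hv0 (show a < a + L/3 by linarith)
  obtain ⟨η, hηmem, hη⟩ := fo_exists_mean v hv0 (show b - L/3 < b by linarith)
  have e1 : a + L/3 - a = L/3 := by ring
  have e2 : b - (b - L/3) = L/3 := by ring
  rw [e1] at hξ; rw [e2] at hη
  have hmonoQ1 : (∫ x in a..(a+L/3), (v x)^2) ≤ Q := by
    apply intervalIntegral.integral_mono_interval le_rfl (by linarith) (by linarith)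
    · filter_upwards with t using sq_nonneg _
    · exact (hv0.pow 2).intervalIntegrable a b
  have hmonoQ2 : (∫ x in (b-L/3)..b, (v x)^2) ≤ Q := by
    apply intervalIntegral.integral_mono_interval (by linarith) (by linarith) le_rfl
    · filter_upwards with t using sq_nonneg _
    · exact (hv0.pow 2).intervalIntegrable a b
  have hξQ : L/3 * (v ξ)^2 ≤ Q := hξ.trans hmonoQ1
  have hηQ : L/3 * (v η)^2 ≤ Q := hη.trans hmonoQ2
  have hξη : ξ < η := by
    have h1 := hξmem.2; have h2' := hηmem.1; linarith
  obtain ⟨ζ, hζmem, hζ⟩ := exists_hasDerivAt_eq_slope v (deriv v) hξη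
    hv0.continuousOn (fun x _ => hdv x)
  have hζab : ζ ∈ Set.Icc a b := by
    constructor
    · linarith [hζmem.1.le, hξmem.1]
    · linarith [hζmem.2.le, hηmem.2]
  -- slope bound
  have hgap : L/3 ≤ η - ξ := by linarith [hξmem.2, hηmem.1]
  have hne : η - ξ ≠ 0 := sub_ne_zero.2 hξη.ne'
  have hsq : (deriv v ζ)^2 * (η - ξ)^2 = (v η - v ξ)^2 := by
    rw [hζ]; field_simp
  have hslope : L^3 * (deriv v ζ)^2 ≤ 108 * Q := by
    have hA0 : 0 ≤ (deriv v ζ)^2 := sq_nonneg _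
    have hstep : (deriv v ζ)^2 * (L/3)^2 ≤ (deriv v ζ)^2 * (η-ξ)^2 :=
      mul_le_mul_of_nonneg_left (pow_le_pow_left₀ (by linarith) hgap 2) hA0
    have h4 : (deriv v ζ)^2 * (L/3)^2 ≤ 2*(v η)^2 + 2*(v ξ)^2 := by
      nlinarith [sq_nonneg (v η + v ξ)]
    have h5 : L * ((deriv v ζ)^2 * (L/3)^2) ≤ L * (2*(v η)^2 + 2*(v ξ)^2) :=
      mul_le_mul_of_nonneg_left h4 hL.le
    nlinarith [h5, hξQ, hηQ]
  -- bound the integral of 2L|F|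
  have hAbs : 2*L*∫ t in a..b, |F t| ≤ P + 4*L^2*S := by
    have hmono : ∀ t ∈ Set.Icc a b,
        2*L*|F t| ≤ (deriv v t)^2 + 4*L^2*(deriv (deriv v) t)^2 := fun t _ =>
      fo_young (deriv v t) (deriv (deriv v) t) L hL
    have hstep := integral_mono_on hab.le
      (f := fun t => 2*L*|F t|) (g := fun t => (deriv v t)^2 + 4*L^2*(deriv (deriv v) t)^2)
      (Continuous.intervalIntegrable (μ := volume) (continuous_const.mul hF.abs) a b)
      (((hv1.pow 2).add (continuous_const.mul (hv2.pow 2))).intervalIntegrable a b)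
      hmono
    rw [intervalIntegral.integral_const_mul] at hstep
    rw [intervalIntegral.integral_add (f := fun x => (deriv v x)^2)
      (g := fun x => 4*L^2*(deriv (deriv v) x)^2) ((hv1.pow 2).intervalIntegrable a b)
      ((continuous_const.mul (hv2.pow 2)).intervalIntegrable a b),
      intervalIntegral.integral_const_mul] at hstep
    exact hstep
  -- pointwise bound, multiplied by 2L^4
  have hpt : ∀ x ∈ Set.Icc a b,
      2*L^4*(deriv v x)^2 ≤ 216*L*Q + L^3*P + 4*L^5*S := by
    intro x hx
    have hftc : ∫ t in ζ..x, F t = (deriv v x)^2 - (deriv v ζ)^2 := by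
      apply intervalIntegral.integral_eq_sub_of_hasDerivAt
      · intro u _
        have h : HasDerivAt (fun x => (deriv v x)^2) _ u := (hdv2 u).pow 2
        simpa [hFdef, pow_one, mul_comm, mul_assoc, mul_left_comm] using h
      · exact hF.intervalIntegrable ζ x
    have hsub := fo_sub_integral_bound F hF hζab hx
    -- (deriv v x)^2 ≤ (deriv v ζ)^2 + ∫|F|
    have h1 : (deriv v x)^2 ≤ (deriv v ζ)^2 + ∫ t in a..b, |F t| := by linarith
    have h2 : 2*L^4*(deriv v x)^2 ≤ 2*L^4*((deriv v ζ)^2 + ∫ t in a..b, |F t|) :=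
      mul_le_mul_of_nonneg_left h1 (by positivity)
    have h3 : 2*L^4*(deriv v ζ)^2 = 2*L*(L^3*(deriv v ζ)^2) := by ring
    have h4 : 2*L^4*(deriv v ζ)^2 ≤ 2*L*(108*Q) := by
      rw [h3]; exact mul_le_mul_of_nonneg_left hslope (by positivity)
    have h5 : 2*L^4*(∫ t in a..b, |F t|) = L^3*(2*L*∫ t in a..b, |F t|) := by ring
    have h6 : 2*L^4*(∫ t in a..b, |F t|) ≤ L^3*(P + 4*L^2*S) := by
      rw [h5]; exact mul_le_mul_of_nonneg_left hAbs (by positivity)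
    nlinarith [h2, h4, h6]
  -- integrate the pointwise bound
  have hPbound : 2*L^4*P ≤ L*(216*L*Q + L^3*P + 4*L^5*S) := by
    have hstep := integral_mono_on hab.le
      (f := fun x => 2*L^4*(deriv v x)^2) (g := fun _ => 216*L*Q + L^3*P + 4*L^5*S)
      (Continuous.intervalIntegrable (μ := volume) (continuous_const.mul (hv1.pow 2)) a b)
      _root_.intervalIntegrable_const hpt
    rw [intervalIntegral.integral_const_mul, intervalIntegral.integral_const,
      smul_eq_mul, ← hLdef] at hstep
    exact hstep
  -- conclude : L^2 P ≤ 216 Q + 4 L^4 S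
  have hfin : L^4*(L^2*P) ≤ L^4*(216*Q + 4*L^4*S) := by nlinarith [hPbound]
  have := le_of_mul_le_mul_left (by
    calc L^4*(L^2*P) ≤ L^4*(216*Q + 4*L^4*S) := hfin) (by positivity : (0:ℝ) < L^4)
  linarith [this]

set_option maxHeartbeats 1000000 in
lemma fo_interp (v : ℝ → ℝ) (hv : ContDiff ℝ 2 v) {ℓ : ℝ} (h0 : 0 < ℓ) (h1 : ℓ ≤ 1) :
    ℓ^2 * (∫ x in (-1:ℝ)..0, (deriv v x)^2) ≤
      864 * ((∫ x in (-1:ℝ)..0, (v x)^2) + ℓ^4 * (∫ x in (-1:ℝ)..0, (deriv (deriv v) x)^2)) := by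
  have hv0 : Continuous v := hv.continuous
  have h2 : ContDiff ℝ 1 (deriv v) := by
    have hv' : ContDiff ℝ ((1 + 1 : ℕ) : WithTop ℕ∞) v := by exact_mod_cast hv
    have h := ContDiff.iterate_deriv' 1 1 hv'
    simpa using h
  have hv1 : Continuous (deriv v) := h2.continuous
  have hv2 : Continuous (deriv (deriv v)) := h2.continuous_deriv le_rfl
  set n : ℕ := ⌈1/ℓ⌉₊ with hndef
  have hnpos : 0 < n := Nat.ceil_pos.2 (by positivity)
  have hnR : (0:ℝ) < (n:ℝ) := by exact_mod_cast hnpos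
  set m : ℝ := ((n:ℝ))⁻¹ with hmdef
  have hm : 0 < m := by positivity
  have hnm : (n:ℝ) * m = 1 := mul_inv_cancel₀ (ne_of_gt hnR)
  have hmℓ : m ≤ ℓ := by
    rw [hmdef, inv_le_comm₀ hnR h0, hndef]
    simpa [one_div] using (Nat.le_ceil (1/ℓ))
  have hℓ2m : ℓ ≤ 2*m := by
    have hlt : ((n:ℕ):ℝ) < 1/ℓ + 1 := by
      exact_mod_cast Nat.ceil_lt_add_one (by positivity : (0:ℝ) ≤ 1/ℓ)
    have h2ℓ : 1/ℓ + 1 ≤ 2/ℓ := by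
      rw [div_add' _ _ _ (ne_of_gt h0), div_le_div_iff₀ h0 h0]
      nlinarith
    have hℓn : ℓ * n ≤ 2 := by
      have : (n:ℝ) ≤ 2/ℓ := le_trans hlt.le h2ℓ
      calc ℓ * n ≤ ℓ * (2/ℓ) := mul_le_mul_of_nonneg_left this h0.le
        _ = 2 := by field_simp
    calc ℓ = (ℓ*(n:ℝ))*m := by rw [mul_assoc, hnm, mul_one]
      _ ≤ 2*m := mul_le_mul_of_nonneg_right hℓn hm.le
  set A : ℕ → ℝ := fun k => -1 + k*m with hAdef
  have ha0 : A 0 = -1 := by simp [hAdef]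
  have han : A n = 0 := by simp only [hAdef]; rw [hnm]; ring
  have hastep : ∀ k : ℕ, A (k+1) - A k = m := by
    intro k; simp only [hAdef]; push_cast; ring
  have halt : ∀ k : ℕ, A k < A (k+1) := by
    intro k; have := hastep k; linarith
  have hint : ∀ (f : ℝ → ℝ), Continuous f → ∀ k < n,
      IntervalIntegrable f volume (A k) (A (k+1)) := fun f hf k _ =>
    hf.intervalIntegrable _ _
  have hsplit₁ : ∑ k ∈ Finset.range n, ∫ x in (A k)..(A (k+1)), (deriv v x)^2
      = ∫ x in (-1:ℝ)..0, (deriv v x)^2 := by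
    rw [intervalIntegral.sum_integral_adjacent_intervals (hint (fun x => (deriv v x)^2) (hv1.pow 2)), ha0, han]
  have hsplit₂ : ∑ k ∈ Finset.range n, ∫ x in (A k)..(A (k+1)), (v x)^2
      = ∫ x in (-1:ℝ)..0, (v x)^2 := by
    rw [intervalIntegral.sum_integral_adjacent_intervals (hint (fun x => (v x)^2) (hv0.pow 2)), ha0, han]
  have hsplit₃ : ∑ k ∈ Finset.range n, ∫ x in (A k)..(A (k+1)), (deriv (deriv v) x)^2
      = ∫ x in (-1:ℝ)..0, (deriv (deriv v) x)^2 := by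
    rw [intervalIntegral.sum_integral_adjacent_intervals (hint (fun x => (deriv (deriv v) x)^2) (hv2.pow 2)), ha0, han]
  have key : ∀ k ∈ Finset.range n,
      m^2 * (∫ x in (A k)..(A (k+1)), (deriv v x)^2) ≤
        216*(∫ x in (A k)..(A (k+1)), (v x)^2)
          + 4*m^4*(∫ x in (A k)..(A (k+1)), (deriv (deriv v) x)^2) := by
    intro k _
    have h := fo_local v hv (halt k)
    rw [hastep k] at h
    exact h
  have hsum := Finset.sum_le_sum key
  rw [← Finset.mul_sum, hsplit₁, Finset.sum_add_distrib, ← Finset.mul_sum, ← Finset.mul_sum,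
    hsplit₂, hsplit₃] at hsum
  set P : ℝ := ∫ x in (-1:ℝ)..0, (deriv v x)^2 with hP
  set Q : ℝ := ∫ x in (-1:ℝ)..0, (v x)^2 with hQ
  set S : ℝ := ∫ x in (-1:ℝ)..0, (deriv (deriv v) x)^2 with hS
  have hP0 : 0 ≤ P := integral_nonneg (by norm_num) (fun x _ => sq_nonneg _)
  have hQ0 : 0 ≤ Q := integral_nonneg (by norm_num) (fun x _ => sq_nonneg _)
  have hS0 : 0 ≤ S := integral_nonneg (by norm_num) (fun x _ => sq_nonneg _)
  have h4m : ℓ^2 ≤ 4*m^2 := by nlinarith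
  have hm4 : m^4 ≤ ℓ^4 := pow_le_pow_left₀ hm.le hmℓ 4
  have hc1 : ℓ^2*P ≤ 4*m^2*P := mul_le_mul_of_nonneg_right h4m hP0
  have hc2 : 16*(m^4*S) ≤ 16*(ℓ^4*S) := by
    have := mul_le_mul_of_nonneg_right hm4 hS0; linarith
  have hq : 0 ≤ ℓ^4*S := by positivity
  linarith [hsum, hc1, hc2, hq]

set_option maxHeartbeats 1000000 in
lemma fo_P2 (q0 q1 q2 q3 q4 : ℝ) (h0 : 0 ≤ q0) (h1n : 0 ≤ q1) (h2n : 0 ≤ q2)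
    (h3n : 0 ≤ q3) (h4n : 0 ≤ q4)
    (H1 : ∀ ℓ : ℝ, 0 < ℓ → ℓ ≤ 1 → ℓ^2*q1 ≤ 864*(q0 + ℓ^4*q2))
    (H2 : ∀ ℓ : ℝ, 0 < ℓ → ℓ ≤ 1 → ℓ^2*q2 ≤ 864*(q1 + ℓ^4*q3))
    (H3 : ∀ ℓ : ℝ, 0 < ℓ → ℓ ≤ 1 → ℓ^2*q3 ≤ 864*(q2 + ℓ^4*q4)) :
    ∀ ℓ : ℝ, 0 < ℓ → ℓ ≤ 1 → ℓ^4*q2 ≤ 2985984^4*(q0 + ℓ^8*q4) := by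
  intro ℓ hp hle
  have ha := H2 (ℓ/1728) (by positivity) (by linarith)
  have hb := H1 (ℓ/2985984) (by positivity) (by linarith)
  have hc := H3 ℓ hp hle
  have hc' : ℓ^4*(ℓ^2*q3) ≤ ℓ^4*(864*(q2 + ℓ^4*q4)) :=
    mul_le_mul_of_nonneg_left hc (by positivity)
  have ha' : ℓ^2*((ℓ/1728)^2*q2) ≤ ℓ^2*(864*(q1 + (ℓ/1728)^4*q3)) :=
    mul_le_mul_of_nonneg_left ha (by positivity)
  have hq4 : 0 ≤ ℓ^8*q4 := by positivity
  nlinarith [ha', hb, hc', hq4, h0]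

set_option maxHeartbeats 2000000 in
lemma fo_assemble (κ s X0 X1 X2 X3 X4 F2 : ℝ)
    (hκ : 1 ≤ κ) (hs0 : 0 < s) (hs1 : s ≤ 1)
    (hsκ : 4*κ^2*2985984^4*s^2 ≤ 1)
    (hX0 : 0 ≤ X0) (hX1 : 0 ≤ X1) (hX2 : 0 ≤ X2) (hX3 : 0 ≤ X3) (hX4 : 0 ≤ X4)
    (hF : 0 ≤ F2)
    (A2 : s^2*X2 ≤ 2985984^4*X0 + 2985984^4*(s^4*X4))
    (B1 : s*X1 ≤ 864*X0 + 864*(s^2*X2))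
    (C3 : s*X3 ≤ 864*X2 + 864*(s^2*X4))
    (hδ : X4 ≤ 2*F2 + 2*κ^2*X2) :
    s^4*(X4 + X3 + X2 + X1 + X0) ≤ 10^60*κ^2*(F2 + X0) := by
  have hs2 : 0 < s^2 := by positivity
  have h1s2 : 0 ≤ 1 - s^2 := by nlinarith
  have h1s : 0 ≤ 1 - s := by linarith
  have step1 : 2*κ^2*(s^2*X2) ≤ 2*κ^2*(2985984^4*X0 + 2985984^4*(s^4*X4)) :=
    mul_le_mul_of_nonneg_left A2 (by positivity)
  have step2 : 4*κ^2*2985984^4*s^2*(s^2*X4) ≤ 1*(s^2*X4) :=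
    mul_le_mul_of_nonneg_right hsκ (by positivity)
  have stepδ : s^2*X4 ≤ s^2*(2*F2 + 2*κ^2*X2) :=
    mul_le_mul_of_nonneg_left hδ (sq_nonneg s)
  have hsF : s^2*F2 ≤ F2 := by nlinarith
  have Q4 : s^2*X4 ≤ 4*F2 + 4*κ^2*2985984^4*X0 := by nlinarith [step1, step2, stepδ, hsF]
  have hs4X4 : s^4*X4 ≤ s^2*X4 := by nlinarith [mul_nonneg h1s2 (mul_nonneg hs2.le hX4)]
  have Q4' : s^4*X4 ≤ 4*F2 + 4*κ^2*2985984^4*X0 := hs4X4.trans Q4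
  have hQ4N := mul_le_mul_of_nonneg_left (hs4X4.trans Q4)
    (by norm_num : (0:ℝ) ≤ 2985984^4)
  have Q2 : s^2*X2 ≤ 2985984^4*X0 + 2985984^4*(4*F2 + 4*κ^2*2985984^4*X0) := by
    linarith [A2, hQ4N]
  have hs4X2 : s^4*X2 ≤ s^2*X2 := by nlinarith [mul_nonneg h1s2 (mul_nonneg hs2.le hX2)]
  have Q2' : s^4*X2 ≤ 2985984^4*X0 + 2985984^4*(4*F2 + 4*κ^2*2985984^4*X0) :=
    hs4X2.trans Q2
  -- X1
  have hB : s^3*(s*X1) ≤ s^3*(864*X0 + 864*(s^2*X2)) :=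
    mul_le_mul_of_nonneg_left B1 (by positivity)
  have hs3X0 : s^3*X0 ≤ X0 := by nlinarith [mul_nonneg h1s (mul_nonneg (by positivity : (0:ℝ) ≤ s^2) hX0), mul_nonneg h1s2 (mul_nonneg hs0.le hX0), mul_nonneg h1s hX0]
  have hs5X2 : s^3*(s^2*X2) ≤ s^2*X2 := by
    nlinarith [mul_nonneg h1s (mul_nonneg (by positivity : (0:ℝ) ≤ s^4) hX2),
      mul_nonneg h1s2 (mul_nonneg (by positivity : (0:ℝ) ≤ s^3) hX2),
      mul_nonneg h1s (mul_nonneg hs2.le hX2)]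
  have Q1 : s^4*X1 ≤ 864*X0 + 864*(s^2*X2) := by nlinarith [hB, hs3X0, hs5X2]
  have hQ2861 := mul_le_mul_of_nonneg_left Q2 (by norm_num : (0:ℝ) ≤ 864)
  have Q1' : s^4*X1 ≤ 864*X0 + 864*(2985984^4*X0 + 2985984^4*(4*F2 + 4*κ^2*2985984^4*X0)) := by
    linarith [Q1, hQ2861]
  -- X3
  have hC : s^3*(s*X3) ≤ s^3*(864*X2 + 864*(s^2*X4)) :=
    mul_le_mul_of_nonneg_left C3 (by positivity)
  have hs3X2 : s^3*X2 ≤ s^2*X2 := by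
    nlinarith [mul_nonneg h1s (mul_nonneg hs2.le hX2)]
  have hs5X4 : s^3*(s^2*X4) ≤ s^2*X4 := by
    nlinarith [mul_nonneg h1s (mul_nonneg (by positivity : (0:ℝ) ≤ s^4) hX4),
      mul_nonneg h1s2 (mul_nonneg (by positivity : (0:ℝ) ≤ s^3) hX4),
      mul_nonneg h1s (mul_nonneg hs2.le hX4)]
  have Q3 : s^4*X3 ≤ 864*(s^2*X2) + 864*(s^2*X4) := by nlinarith [hC, hs3X2, hs5X4]
  have Q3' : s^4*X3 ≤ 864*(2985984^4*X0 + 2985984^4*(4*F2 + 4*κ^2*2985984^4*X0))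
      + 864*(4*F2 + 4*κ^2*2985984^4*X0) := by
    have h864Q4 := mul_le_mul_of_nonneg_left Q4 (by norm_num : (0:ℝ) ≤ 864)
    linarith [Q3, hQ2861, h864Q4]
  have hs4X0 : s^4*X0 ≤ X0 := by
    nlinarith [mul_nonneg h1s2 (mul_nonneg (by positivity : (0:ℝ) ≤ s^2) hX0),
      mul_nonneg h1s2 hX0]
  have hκ2 : 1 ≤ κ^2 := by nlinarith
  have hκF : F2 ≤ κ^2*F2 := by
    have := mul_le_mul_of_nonneg_right hκ2 hF; linarith
  have hκX0 : X0 ≤ κ^2*X0 := by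
    have := mul_le_mul_of_nonneg_right hκ2 hX0; linarith
  nlinarith [Q4', Q3', Q2', Q1', hs4X0, hκF, hκX0]

set_option maxHeartbeats 2000000 in
theorem fourth_order_elliptic_estimate (a lam₀ : ℝ) (ha : 0 ≤ a) (hlam₀ : 0 < lam₀) :
    ∃ C' : ℝ, 0 < C' ∧ ∀ lam : ℝ, lam₀ ≤ lam → ∀ y : ℝ → ℝ, ContDiff ℝ 4 y →
      y (-1) = 0 → y 0 = 0 → deriv y 0 = 0 →
      ∑ k ∈ Finset.range 5, lam^k * (∫ x in (-1:ℝ)..0, (iteratedDeriv (4-k) y x)^2) ≤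
        C' * ((∫ x in (-1:ℝ)..0, (iteratedDeriv 4 y x + (a - lam) * iteratedDeriv 2 y x)^2) +
              (∫ x in (-1:ℝ)..0, (iteratedDeriv 3 y x + (a - lam) * deriv y x)^2) +
              lam^4 * (∫ x in (-1:ℝ)..0, (y x)^2)) := by
  obtain ⟨μ, hμdef⟩ : ∃ μ : ℝ, μ = a/lam₀ := ⟨_, rfl⟩
  have hμ0 : 0 ≤ μ := by rw [hμdef]; positivity
  have hμa : μ * lam₀ = a := by rw [hμdef]; field_simp
  obtain ⟨κ, hκdef⟩ : ∃ κ : ℝ, κ = 1 + μ := ⟨_, rfl⟩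
  have hκ1 : 1 ≤ κ := by rw [hκdef]; linarith
  obtain ⟨s, hsdef⟩ : ∃ s : ℝ, s = min lam₀ (min 1 (1/(4*κ^2*2985984^4))) := ⟨_, rfl⟩
  have hs0 : 0 < s := by
    rw [hsdef]
    apply lt_min hlam₀
    apply lt_min one_pos
    positivity
  have hs1 : s ≤ 1 := by
    rw [hsdef]; exact le_trans (min_le_right _ _) (min_le_left _ _)
  have hsl : s ≤ lam₀ := by rw [hsdef]; exact min_le_left _ _
  have hsr : s ≤ 1/(4*κ^2*2985984^4) := by
    rw [hsdef]; exact le_trans (min_le_right _ _) (min_le_right _ _)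
  have hsκ : 4*κ^2*2985984^4*s^2 ≤ 1 := by
    have hpos : (0:ℝ) < 4*κ^2*2985984^4 := by positivity
    have h1 : s*(4*κ^2*2985984^4) ≤ 1 := by
      rw [← le_div_iff₀ hpos]; simpa [one_div] using hsr
    calc 4*κ^2*2985984^4*s^2 = (s*(4*κ^2*2985984^4))*s := by ring
      _ ≤ 1*s := mul_le_mul_of_nonneg_right (by linarith) hs0.le
      _ ≤ 1 := by linarith
  refine ⟨10^60*κ^2/s^4, by positivity, ?_⟩
  intro lam hlam y hy hbc1 hbc2 hbc3
  have hlam0 : 0 < lam := lt_of_lt_of_le hlam₀ hlam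
  -- notation
  set q : ℕ → ℝ := fun j => ∫ x in (-1:ℝ)..0, (deriv^[j] y x)^2 with hqdef
  have hcont : ∀ j : ℕ, j ≤ 4 → Continuous (deriv^[j] y) := by
    intro j hj
    have h : ContDiff ℝ 0 (deriv^[j] y) := by
      apply ContDiff.iterate_deriv' 0 j
      apply hy.of_le
      have : ((0+j : ℕ) : WithTop ℕ∞) ≤ ((4:ℕ) : WithTop ℕ∞) := by
        exact_mod_cast (by omega : 0+j ≤ 4)
      simpa using this
    exact h.continuous
  have hq0 : ∀ j : ℕ, 0 ≤ q j := fun j =>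
    integral_nonneg (by norm_num) (fun x _ => sq_nonneg _)
  have hcd2 : ∀ j : ℕ, j ≤ 2 → ContDiff ℝ 2 (deriv^[j] y) := by
    intro j hj
    apply ContDiff.iterate_deriv' 2 j
    apply hy.of_le
    have : ((2+j : ℕ) : WithTop ℕ∞) ≤ ((4:ℕ) : WithTop ℕ∞) := by
      exact_mod_cast (by omega : 2+j ≤ 4)
    simpa using this
  have hit : ∀ j : ℕ, deriv (deriv^[j] y) = deriv^[j+1] y := fun j =>
    (Function.iterate_succ_apply' deriv j y).symm
  -- the three interpolation families
  have hfam : ∀ j : ℕ, j ≤ 2 → ∀ ℓ : ℝ, 0 < ℓ → ℓ ≤ 1 →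
      ℓ^2*(q (j+1)) ≤ 864*(q j + ℓ^4*(q (j+2))) := by
    intro j hj ℓ hp hle
    have h := fo_interp (deriv^[j] y) (hcd2 j hj) hp hle
    rw [hit j] at h
    rw [hit (j+1)] at h
    exact h
  have hP2 := fo_P2 (q 0) (q 1) (q 2) (q 3) (q 4) (hq0 0) (hq0 1) (hq0 2) (hq0 3) (hq0 4)
    (hfam 0 (by omega)) (hfam 1 (by omega)) (hfam 2 (by omega))
  -- the scale ℓ
  set ℓ : ℝ := Real.sqrt s / Real.sqrt lam with hldef
  have hl0 : 0 < ℓ := by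
    rw [hldef]; positivity
  have hel : ℓ^2 * lam = s := by
    rw [hldef, div_pow, Real.sq_sqrt hs0.le, Real.sq_sqrt hlam0.le]
    field_simp
  have hl1 : ℓ ≤ 1 := by
    rw [hldef, div_le_one (by positivity)]
    exact Real.sqrt_le_sqrt (le_trans hsl hlam)
  -- polynomial forms
  have hα := hP2 ℓ hl0 hl1
  have hβ := hfam 0 (by omega) ℓ hl0 hl1
  have hγ := hfam 2 (by omega) ℓ hl0 hl1
  have A2 : s^2*(lam^2*(q 2)) ≤ 2985984^4*(lam^4*(q 0)) + 2985984^4*(s^4*(q 4)) := by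
    have h := mul_le_mul_of_nonneg_left hα (by positivity : (0:ℝ) ≤ lam^4)
    have e1 : lam^4*(ℓ^4*(q 2)) = s^2*(lam^2*(q 2)) := by rw [← hel]; ring
    have e2 : lam^4*(2985984^4*(q 0 + ℓ^8*(q 4))) = 2985984^4*(lam^4*(q 0)) + 2985984^4*(s^4*(q 4)) := by
      rw [← hel]; ring
    rw [e1, e2] at h
    exact h
  have B1 : s*(lam^3*(q 1)) ≤ 864*(lam^4*(q 0)) + 864*(s^2*(lam^2*(q 2))) := by
    have h := mul_le_mul_of_nonneg_left hβ (by positivity : (0:ℝ) ≤ lam^4)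
    have e1 : lam^4*(ℓ^2*(q 1)) = s*(lam^3*(q 1)) := by rw [← hel]; ring
    have e2 : lam^4*(864*(q 0 + ℓ^4*(q 2))) = 864*(lam^4*(q 0)) + 864*(s^2*(lam^2*(q 2))) := by
      rw [← hel]; ring
    rw [e1, e2] at h
    exact h
  have C3 : s*(lam*(q 3)) ≤ 864*(lam^2*(q 2)) + 864*(s^2*(q 4)) := by
    have h := mul_le_mul_of_nonneg_left hγ (by positivity : (0:ℝ) ≤ lam^2)
    have e1 : lam^2*(ℓ^2*(q 3)) = s*(lam*(q 3)) := by rw [← hel]; ring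
    have e2 : lam^2*(864*(q 2 + ℓ^4*(q 4))) = 864*(lam^2*(q 2)) + 864*(s^2*(q 4)) := by
      rw [← hel]; ring
    rw [e1, e2] at h
    exact h
  -- δ : q4 ≤ 2 F2 + 2 κ² lam² q2
  set F2 : ℝ := ∫ x in (-1:ℝ)..0, (iteratedDeriv 4 y x + (a - lam) * iteratedDeriv 2 y x)^2
    with hF2def
  set G2 : ℝ := ∫ x in (-1:ℝ)..0, (iteratedDeriv 3 y x + (a - lam) * deriv y x)^2 with hG2def
  have hF20 : 0 ≤ F2 := integral_nonneg (by norm_num) (fun x _ => sq_nonneg _)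
  have hG20 : 0 ≤ G2 := integral_nonneg (by norm_num) (fun x _ => sq_nonneg _)
  have haκ : (a - lam)^2 ≤ κ^2*lam^2 := by
    have h1 : a ≤ μ*lam := by
      rw [← hμa]
      exact mul_le_mul_of_nonneg_left hlam hμ0
    have h2 : a - lam ≤ κ*lam := by
      have hk : κ*lam = lam + μ*lam := by rw [hκdef]; ring
      rw [hk]; linarith
    have h3 : -(κ*lam) ≤ a - lam := by
      have hkl : lam ≤ κ*lam := by nlinarith
      linarith
    calc (a-lam)^2 ≤ (κ*lam)^2 := sq_le_sq' h3 h2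
      _ = κ^2*lam^2 := by ring
  have hδ : q 4 ≤ 2*F2 + 2*κ^2*(lam^2*(q 2)) := by
    have hcf : Continuous (fun x => iteratedDeriv 4 y x + (a - lam) * iteratedDeriv 2 y x) := by
      simp only [iteratedDeriv_eq_iterate]
      exact (hcont 4 (by omega)).add (continuous_const.mul (hcont 2 (by omega)))
    have hstep := integral_mono_on (μ := volume)
      (f := fun x => (deriv^[4] y x)^2)
      (g := fun x => 2*(iteratedDeriv 4 y x + (a - lam) * iteratedDeriv 2 y x)^2
        + (2*(a-lam)^2)*(deriv^[2] y x)^2)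
      (by norm_num : (-1:ℝ) ≤ 0)
      (((hcont 4 (by omega)).pow 2).intervalIntegrable (-1) 0)
      (((continuous_const.mul (hcf.pow 2)).add
        (continuous_const.mul ((hcont 2 (by omega)).pow 2))).intervalIntegrable (-1) 0)
      (by
        intro x _
        simp only [iteratedDeriv_eq_iterate]
        nlinarith [sq_nonneg (deriv^[4] y x + 2*(a-lam)*(deriv^[2] y x))])
    rw [intervalIntegral.integral_add
        (f := fun x => 2*(iteratedDeriv 4 y x + (a - lam) * iteratedDeriv 2 y x)^2)
        (g := fun x => (2*(a-lam)^2)*(deriv^[2] y x)^2)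
        ((continuous_const.mul (hcf.pow 2)).intervalIntegrable (μ := volume) (-1) 0)
        ((continuous_const.mul ((hcont 2 (by omega)).pow 2)).intervalIntegrable (μ := volume) (-1) 0),
      intervalIntegral.integral_const_mul, intervalIntegral.integral_const_mul] at hstep
    have hq2κ : (2*(a-lam)^2)*(q 2) ≤ (2*(κ^2*lam^2))*(q 2) := by
      apply mul_le_mul_of_nonneg_right _ (hq0 2)
      linarith [haκ]
    calc q 4 ≤ 2*F2 + (2*(a-lam)^2)*(q 2) := hstep
      _ ≤ 2*F2 + (2*(κ^2*lam^2))*(q 2) := by linarith [hq2κ]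
      _ = 2*F2 + 2*κ^2*(lam^2*(q 2)) := by ring
  -- assemble
  have hmain := fo_assemble κ s (lam^4*(q 0)) (lam^3*(q 1)) (lam^2*(q 2)) (lam*(q 3)) (q 4) F2
    hκ1 hs0 hs1 hsκ
    (mul_nonneg (by positivity) (hq0 0)) (mul_nonneg (by positivity) (hq0 1)) (mul_nonneg (by positivity) (hq0 2)) (mul_nonneg (by positivity) (hq0 3)) (hq0 4) hF20
    A2 B1 C3 hδ
  -- rewrite the sum
  have hsum : ∑ k ∈ Finset.range 5, lam^k * (∫ x in (-1:ℝ)..0, (iteratedDeriv (4-k) y x)^2)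
      = q 4 + lam*(q 3) + lam^2*(q 2) + lam^3*(q 1) + lam^4*(q 0) := by
    rw [Finset.sum_range_succ, Finset.sum_range_succ, Finset.sum_range_succ,
      Finset.sum_range_succ, Finset.sum_range_succ, Finset.sum_range_zero]
    norm_num [iteratedDeriv_eq_iterate, hqdef]
    try ring
  rw [hsum]
  -- final
  have hC'pos : (0:ℝ) < 10^60*κ^2/s^4 := by positivity
  have hfinal : (q 4 + lam*(q 3) + lam^2*(q 2) + lam^3*(q 1) + lam^4*(q 0))
      ≤ 10^60*κ^2/s^4 * (F2 + lam^4*(q 0)) := by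
    rw [div_mul_eq_mul_div, le_div_iff₀ (by positivity : (0:ℝ) < s^4)]
    calc (q 4 + lam*(q 3) + lam^2*(q 2) + lam^3*(q 1) + lam^4*(q 0)) * s^4
        = s^4*((q 4) + lam*(q 3) + lam^2*(q 2) + lam^3*(q 1) + lam^4*(q 0)) := by ring
      _ ≤ 10^60*κ^2*(F2 + lam^4*(q 0)) := hmain
  have hG2term : 10^60*κ^2/s^4 * (F2 + lam^4*(q 0)) ≤
      10^60*κ^2/s^4 * (F2 + G2 + lam^4*(q 0)) := by
    apply mul_le_mul_of_nonneg_left _ hC'pos.le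
    linarith [hG20]
  calc q 4 + lam*(q 3) + lam^2*(q 2) + lam^3*(q 1) + lam^4*(q 0)
      ≤ 10^60*κ^2/s^4 * (F2 + lam^4*(q 0)) := hfinal
    _ ≤ 10^60*κ^2/s^4 * (F2 + G2 + lam^4*(q 0)) := hG2term
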